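/- Let n ≥ 2 be an integer and let Z_n = {0, 1, ..., n-1} be the cyclic group of order n. The subgraph of the strong power graph P_s(Z_n) induced by the set of nonzero elements Z_n \ {0} is complete, i.e., any two distinct nonzero elements of Z_n are adjacent in P_s(Z_n). -/

import Mathlib

/-- The strong power graph of the cyclic group `ZMod n` (written additively):
two distinct vertices `x` and `y` are adjacent iff `a • x = b • y` for some
positive integers `a, b < n`. -/
def strongPowerGraphZ (n : ℕ) : SimpleGraph (ZMod n) where
  Adj x y := x ≠ y ∧ ∃ a b : ℕ, 0 < a ∧ a < n ∧ 0 < b ∧ b < n ∧ a • x = b • y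
  symm := by
    constructor
    rintro x y ⟨h, a, b, ha, ha', hb, hb', hab⟩
    exact ⟨h.symm, b, a, hb, hb', ha, ha', hab.symm⟩
  loopless := by
    constructor
    rintro x ⟨h, -⟩
    exact h rfl

/-- For `n ≥ 2`, the subgraph of the strong power graph of `ZMod n` induced by
the nonzero elements is complete: any two distinct nonzero elements are adjacent. -/
theorem strongPowerGraphZ_induced_nonzero_complete (n : ℕ) (hn : 2 ≤ n) :
    ∀ x y : ZMod n, x ≠ 0 → y ≠ 0 → x ≠ y → (strongPowerGraphZ n).Adj x y := by
  intro x y hx hy hxy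
  haveI : NeZero n := ⟨by omega⟩
  refine ⟨hxy, y.val, x.val, ?_, y.val_lt, ?_, x.val_lt, ?_⟩
  · exact Nat.pos_of_ne_zero fun h => hy (by rwa [← ZMod.val_eq_zero])
  · exact Nat.pos_of_ne_zero fun h => hx (by rwa [← ZMod.val_eq_zero])
  · rw [nsmul_eq_mul, nsmul_eq_mul, ZMod.natCast_val, ZMod.natCast_val,
      ZMod.cast_id, ZMod.cast_id, mul_comm]
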